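/- Let G = F_∞ be the free group on a countably infinite set, and let Γ = {f ∈ Homeo₀(ℝ) : f(0) = 0}. If U and V are nonempty open subsets of Rep_min(G) (with the topology of pointwise convergence) that are each invariant under conjugation by every element of Γ (that is, f.φ ∈ U whenever φ ∈ U and f ∈ Γ, and similarly for V), then the closures of U and V in Rep_min(G) intersect. -/

import Mathlib

open Topology Filter

/-!  `ℝ ≃o ℝ` is the group `Homeo₀(ℝ)` of orientation-preserving homeomorphisms of the
line (order isomorphisms of `ℝ`).  An action of a group `G` on the line is a group
homomorphism `G →* (ℝ ≃o ℝ)`. -/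

/-- The underlying map of an action, as a point of the function space `G → ℝ → ℝ`
(equipped with the product topology of pointwise convergence and its Borel σ-algebra). -/
def actMap {G : Type*} [Group G] (φ : G →* (ℝ ≃o ℝ)) : G → ℝ → ℝ := fun g => ⇑(φ g)

/-- An action is minimal if every orbit is dense. -/
def IsMinimalAction {G : Type*} [Group G] (φ : G →* (ℝ ≃o ℝ)) : Prop :=
  ∀ x : ℝ, Dense {y : ℝ | ∃ g : G, φ g x = y}

/-- Conjugation of (the underlying map of) an action by `f ∈ Homeo₀(ℝ)`. -/
def conjFun {G : Type*} (f : ℝ ≃o ℝ) (F : G → ℝ → ℝ) : G → ℝ → ℝ :=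
  fun g x => f (F g (f.symm x))

/-- The space of minimal actions of `G` on the line, as a subset of the function
space `G → ℝ → ℝ`. -/
def RepMin (G : Type*) [Group G] : Set (G → ℝ → ℝ) :=
  {F | ∃ φ : G →* (ℝ ≃o ℝ), IsMinimalAction φ ∧ F = actMap φ}

/-- `G` belongs to the class `𝒞`: the conjugacy relation on `RepMin G` is smooth, i.e.
there is a Borel map to `ℝ` whose fibers are exactly the conjugacy classes. -/
def ClassC (G : Type*) [Group G] : Prop :=
  ∃ r : (RepMin G) → ℝ, Measurable r ∧
    ∀ φ ψ : RepMin G, (r φ = r ψ ↔ ∃ f : ℝ ≃o ℝ, conjFun f (φ : G → ℝ → ℝ) = (ψ : G → ℝ → ℝ))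

noncomputable section

def jraw (x : ℝ) : ℝ := x / (1 + |x|)
def jrawInv (y : ℝ) : ℝ := y / (1 - |y|)

lemma one_add_abs_pos (x : ℝ) : 0 < 1 + |x| := by positivity

lemma abs_jraw_lt_one (x : ℝ) : |jraw x| < 1 := by
  rw [jraw, abs_div, abs_of_pos (one_add_abs_pos x), div_lt_one (one_add_abs_pos x)]
  linarith [abs_nonneg x]

lemma jraw_zero : jraw 0 = 0 := by simp [jraw]

lemma jrawInv_jraw (x : ℝ) : jrawInv (jraw x) = x := by
  have h := one_add_abs_pos x
  rw [jrawInv, jraw, abs_div, abs_of_pos h]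
  have h2 : 1 - |x| / (1 + |x|) = 1 / (1 + |x|) := by field_simp; ring
  rw [h2]
  field_simp

lemma jraw_jrawInv {y : ℝ} (hy : |y| < 1) : jraw (jrawInv y) = y := by
  have h : 0 < 1 - |y| := by linarith
  rw [jraw, jrawInv, abs_div, abs_of_pos h]
  have h2 : 1 + |y| / (1 - |y|) = 1 / (1 - |y|) := by field_simp; ring
  rw [h2]
  field_simp

lemma strictMono_jraw : StrictMono jraw := by
  apply strictMono_of_odd_strictMonoOn_nonneg
  · intro x; simp [jraw, abs_neg, neg_div]
  · rintro x (hx : 0 ≤ x) y (hy : 0 ≤ y) hxy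
    rw [jraw, jraw, abs_of_nonneg hx, abs_of_nonneg hy,
      div_lt_div_iff₀ (by positivity) (by positivity)]
    nlinarith

/-- squeeze of `ℝ` into `(-d, d)` -/
def jd (d x : ℝ) : ℝ := d * jraw x
def jId (d y : ℝ) : ℝ := jrawInv (y / d)

lemma abs_jd_lt {d : ℝ} (hd : 0 < d) (x : ℝ) : |jd d x| < d := by
  rw [jd, abs_mul, abs_of_pos hd]
  calc d * |jraw x| < d * 1 := by
        exact (mul_lt_mul_iff_right₀ hd).2 (abs_jraw_lt_one x)
    _ = d := mul_one d

lemma jd_strictMono {d : ℝ} (hd : 0 < d) : StrictMono (jd d) :=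
  fun _ _ h => (mul_lt_mul_iff_right₀ hd).2 (strictMono_jraw h)

lemma jId_jd {d : ℝ} (hd : 0 < d) (x : ℝ) : jId d (jd d x) = x := by
  rw [jId, jd, mul_div_cancel_left₀ _ (ne_of_gt hd), jrawInv_jraw]

lemma jd_jId {d y : ℝ} (hd : 0 < d) (hy : |y| < d) : jd d (jId d y) = y := by
  have h : |y / d| < 1 := by
    rw [abs_div, abs_of_pos hd, div_lt_one hd]; exact hy
  rw [jd, jId, jraw_jrawInv h, mul_div_cancel₀ _ (ne_of_gt hd)]

lemma jd_zero (d : ℝ) : jd d 0 = 0 := by simp [jd, jraw_zero]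

/-- `r` squeezed into `(-d,d)`, identity outside. -/
def sqFun (d : ℝ) (r : ℝ → ℝ) (x : ℝ) : ℝ :=
  if |x| < d then jd d (r (jId d x)) else x

lemma sqFun_jd {d : ℝ} (hd : 0 < d) (r : ℝ → ℝ) (t : ℝ) :
    sqFun d r (jd d t) = jd d (r t) := by
  rw [sqFun, if_pos (abs_jd_lt hd t), jId_jd hd]

lemma abs_sqFun_lt {d : ℝ} (hd : 0 < d) (r : ℝ → ℝ) {x : ℝ} (hx : |x| < d) :
    |sqFun d r x| < d := by
  rw [sqFun, if_pos hx]; exact abs_jd_lt hd _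

lemma sqFun_comp {d : ℝ} (hd : 0 < d) (r r' : ℝ → ℝ) (x : ℝ) :
    sqFun d r (sqFun d r' x) = sqFun d (fun t => r (r' t)) x := by
  by_cases h : |x| < d
  · have hin : sqFun d r' x = jd d (r' (jId d x)) := by rw [sqFun]; exact if_pos h
    have hout : sqFun d (fun t => r (r' t)) x = jd d (r (r' (jId d x))) := by
      rw [sqFun]; exact if_pos h
    rw [hin, sqFun_jd hd, hout]
  · have hin : sqFun d r' x = x := by rw [sqFun]; exact if_neg h
    have hout : sqFun d (fun t => r (r' t)) x = x := by rw [sqFun]; exact if_neg h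
    rw [hin, hout, sqFun]; exact if_neg h

lemma sqFun_id {d : ℝ} (hd : 0 < d) (x : ℝ) : sqFun d (fun t => t) x = x := by
  by_cases h : |x| < d
  · rw [sqFun, if_pos h, jd_jId hd h]
  · rw [sqFun, if_neg h]

lemma sqFun_strictMono {d : ℝ} (hd : 0 < d) {r : ℝ → ℝ} (hr : StrictMono r) :
    StrictMono (sqFun d r) := by
  intro x y hxy
  by_cases hx : |x| < d <;> by_cases hy : |y| < d
  · rw [sqFun, if_pos hx, sqFun, if_pos hy]
    have : jId d x < jId d y := by
      have : jd d (jId d x) < jd d (jId d y) := by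
        rwa [jd_jId hd hx, jd_jId hd hy]
      exact lt_of_not_ge fun hle => absurd this (not_lt.2 ((jd_strictMono hd).monotone hle))
    exact jd_strictMono hd (hr this)
  · rw [sqFun, if_pos hx, sqFun, if_neg hy]
    have hyd : d ≤ y := by
      rcases abs_lt.1 hx with ⟨h1, _⟩
      rcases not_lt.1 (not_lt.2 (not_lt.1 (fun hcon => hy (abs_lt.2 ⟨by linarith, hcon⟩)))) with h
      exact h
    exact lt_of_lt_of_le (lt_of_le_of_lt (le_abs_self _) (abs_jd_lt hd _)) hyd
  · rw [sqFun, if_neg hx, sqFun, if_pos hy]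
    have hxd : x ≤ -d := by
      rcases abs_lt.1 hy with ⟨h1, _⟩
      by_contra hcon
      push_neg at hcon
      exact hx (abs_lt.2 ⟨hcon, by linarith⟩)
    calc x ≤ -d := hxd
      _ < jd d (r (jId d y)) := neg_lt_of_abs_lt (abs_jd_lt hd _)
  · rw [sqFun, if_neg hx, sqFun, if_neg hy]; exact hxy

lemma abs_sqFun_sub {d : ℝ} (hd : 0 < d) (r : ℝ → ℝ) (x : ℝ) :
    |sqFun d r x - x| ≤ 2 * d := by
  by_cases h : |x| < d
  · have h1 : |sqFun d r x| < d := abs_sqFun_lt hd r h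
    calc |sqFun d r x - x| ≤ |sqFun d r x| + |x| := abs_sub _ _
      _ ≤ 2 * d := by linarith
  · rw [sqFun, if_neg h, sub_self, abs_zero]; positivity

lemma jraw_neg (x : ℝ) : jraw (-x) = - jraw x := by simp [jraw, abs_neg, neg_div]
lemma jd_neg (d x : ℝ) : jd d (-x) = - jd d x := by rw [jd, jd, jraw_neg, mul_neg]

/-- the squeezed order isomorphism -/
def sqIso {d : ℝ} (hd : 0 < d) (ρ : ℝ ≃o ℝ) : ℝ ≃o ℝ :=
  { toFun := sqFun d ρ
    invFun := sqFun d ρ.symm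
    left_inv := fun x => by
      rw [sqFun_comp hd]
      have : (fun t => ρ.symm (ρ t)) = fun t => t := funext fun t => ρ.symm_apply_apply t
      rw [this, sqFun_id hd]
    right_inv := fun x => by
      rw [sqFun_comp hd]
      have : (fun t => ρ (ρ.symm t)) = fun t => t := funext fun t => ρ.apply_symm_apply t
      rw [this, sqFun_id hd]
    map_rel_iff' := by
      intro a b
      exact (sqFun_strictMono hd ρ.strictMono).le_iff_le }

lemma coe_sqIso {d : ℝ} (hd : 0 < d) (ρ : ℝ ≃o ℝ) : ⇑(sqIso hd ρ) = sqFun d ⇑ρ := rfl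
lemma coe_sqIso_symm {d : ℝ} (hd : 0 < d) (ρ : ℝ ≃o ℝ) :
    ⇑(sqIso hd ρ).symm = sqFun d ⇑ρ.symm := rfl

lemma oi_inv_coe (ρ : ℝ ≃o ℝ) : ⇑(ρ⁻¹) = ⇑ρ.symm := rfl
lemma oi_one_coe : ⇑(1 : ℝ ≃o ℝ) = fun t : ℝ => t := rfl
lemma oi_mul_coe (ρ ρ' : ℝ ≃o ℝ) : ⇑(ρ * ρ') = fun t => ρ (ρ' t) := rfl

/-- squeezing as a monoid hom -/
def sqHom {d : ℝ} (hd : 0 < d) : (ℝ ≃o ℝ) →* (ℝ ≃o ℝ) where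
  toFun := sqIso hd
  map_one' := by
    apply OrderIso.ext
    funext x
    rw [coe_sqIso, oi_one_coe, sqFun_id hd]
  map_mul' := fun ρ ρ' => by
    apply OrderIso.ext
    funext x
    show sqFun d (⇑(ρ * ρ')) x = sqFun d ⇑ρ (sqFun d ⇑ρ' x)
    rw [sqFun_comp hd]
    rfl

/-- piecewise-linear extension of the squeeze on a bounded window -/
lemma exists_plIso {d M : ℝ} (hd : 0 < d) (hM : 0 < M) :
    ∃ f : ℝ ≃o ℝ, (∀ x : ℝ, |x| ≤ M → f x = jd d x) ∧ f 0 = 0 := by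
  classical
  set F : ℝ → ℝ := fun x =>
    if x < -M then jd d (-M) + (x + M) else if x ≤ M then jd d x else jd d M + (x - M) with hF
  set Ginv : ℝ → ℝ := fun y =>
    if y < jd d (-M) then -M + (y - jd d (-M)) else
      if y ≤ jd d M then jId d y else M + (y - jd d M) with hG
  have jmono := jd_strictMono hd
  have hjneg : jd d (-M) = - jd d M := jd_neg d M
  have hjMd : jd d M < d := lt_of_le_of_lt (le_abs_self _) (abs_jd_lt hd M)
  have hjM0 : 0 < jd d M := by
    have := jmono hM; rwa [jd_zero] at this
  have hFG : ∀ y, F (Ginv y) = y := by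
    intro y
    by_cases h1 : y < jd d (-M)
    · have hGy : Ginv y = -M + (y - jd d (-M)) := by rw [hG]; exact if_pos h1
      have : Ginv y < -M := by rw [hGy]; linarith
      rw [hF]
      simp only
      rw [if_pos this, hGy]; ring
    · by_cases h2 : y ≤ jd d M
      · have hyd : |y| < d := by
          rw [abs_lt]; constructor
          · rw [hjneg] at h1; linarith
          · linarith
        have hGy : Ginv y = jId d y := by rw [hG]; simp only; rw [if_neg h1]; exact if_pos h2
        have hjdG : jd d (Ginv y) = y := by rw [hGy]; exact jd_jId hd hyd
        have hlow : ¬ (Ginv y < -M) := by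
          intro hc
          have := jmono hc
          rw [hjdG] at this
          exact h1 this
        have hhigh : Ginv y ≤ M := by
          by_contra hc
          push_neg at hc
          have := jmono hc
          rw [hjdG] at this
          exact absurd h2 (not_le.2 this)
        rw [hF]; simp only
        rw [if_neg hlow, if_pos hhigh, hjdG]
      · push_neg at h2
        have hGy : Ginv y = M + (y - jd d M) := by
          rw [hG]; simp only; rw [if_neg h1]; exact if_neg (not_le.2 h2)
        have h3 : ¬ (Ginv y < -M) := by rw [hGy]; intro h; linarith
        have h4 : ¬ (Ginv y ≤ M) := by rw [hGy]; intro h; linarith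
        rw [hF]; simp only
        rw [if_neg h3, if_neg h4, hGy]; ring
  have hGF : ∀ x, Ginv (F x) = x := by
    intro x
    by_cases h1 : x < -M
    · have hFx : F x = jd d (-M) + (x + M) := by rw [hF]; exact if_pos h1
      have : F x < jd d (-M) := by rw [hFx]; linarith
      rw [hG]; simp only
      rw [if_pos this, hFx]; ring
    · by_cases h2 : x ≤ M
      · push_neg at h1
        have hFx : F x = jd d x := by rw [hF]; simp only; rw [if_neg (not_lt.2 h1)]; exact if_pos h2
        have hl : ¬ (F x < jd d (-M)) := by
          rw [hFx]; exact not_lt.2 (jmono.monotone h1)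
        have hh : F x ≤ jd d M := by rw [hFx]; exact jmono.monotone h2
        rw [hG]; simp only
        rw [if_neg hl, if_pos hh, hFx, jId_jd hd]
      · push_neg at h2
        have hFx : F x = jd d M + (x - M) := by
          rw [hF]; simp only; rw [if_neg (not_lt.2 (by linarith : -M ≤ x))]
          exact if_neg (not_le.2 h2)
        have hl : ¬ (F x < jd d (-M)) := by rw [hFx, hjneg]; intro h; linarith
        have hh : ¬ (F x ≤ jd d M) := by rw [hFx]; intro h; linarith
        rw [hG]; simp only
        rw [if_neg hl, if_neg hh, hFx]; ring
  have hmono : StrictMono F := by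
    intro x y hxy
    rw [hF]; simp only
    split_ifs with hx1 hy1 hy2 hx2 hy1' hy2' hy1'' hy2''
    · linarith
    · have : jd d (-M) ≤ jd d y := jmono.monotone (by linarith)
      linarith
    · have : jd d (-M) ≤ jd d M := jmono.monotone (by linarith)
      linarith
    · exact absurd hxy (by intro h; linarith)
    · exact jmono hxy
    · have : jd d x ≤ jd d M := jmono.monotone hx2
      linarith
    · exact absurd hxy (by intro h; linarith)
    · exact absurd hxy (by intro h; linarith)
    · linarith
  refine ⟨{ toFun := F
            invFun := Ginv
            left_inv := hGF
            right_inv := hFG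
            map_rel_iff' := by intro a b; exact hmono.le_iff_le }, ?_, ?_⟩
  · intro x hx
    rcases abs_le.1 hx with ⟨hx1, hx2⟩
    show F x = jd d x
    rw [hF]; simp only
    rw [if_neg (not_lt.2 (by linarith)), if_pos hx2]
  · show F 0 = 0
    rw [hF]; simp only
    rw [if_neg (not_lt.2 (by linarith)), if_pos (by linarith), jd_zero]

/-! ### group-theoretic machinery -/


/-- conjugation by `f` as a monoid hom of `ℝ ≃o ℝ` -/
def conjHom (f : ℝ ≃o ℝ) : (ℝ ≃o ℝ) →* (ℝ ≃o ℝ) where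
  toFun ρ := (f.symm.trans ρ).trans f
  map_one' := by
    apply OrderIso.ext; funext x
    show f ((1 : ℝ ≃o ℝ) (f.symm x)) = (1 : ℝ ≃o ℝ) x
    rw [oi_one_coe]
    exact f.apply_symm_apply x
  map_mul' := fun ρ ρ' => by
    apply OrderIso.ext; funext x
    show f ((ρ * ρ') (f.symm x)) = f (ρ (f.symm (f (ρ' (f.symm x)))))
    rw [f.symm_apply_apply, RelIso.mul_apply]

lemma conjHom_apply (f : ℝ ≃o ℝ) (ρ : ℝ ≃o ℝ) (x : ℝ) :
    conjHom f ρ x = f (ρ (f.symm x)) := rfl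

lemma dense_oi_image (f : ℝ ≃o ℝ) {s : Set ℝ} (hs : Dense s) : Dense (⇑f '' s) :=
  f.surjective.denseRange.dense_image f.continuous hs

lemma minimal_conj {G : Type*} [Group G] (Φ : G →* (ℝ ≃o ℝ)) (hΦ : IsMinimalAction Φ)
    (f : ℝ ≃o ℝ) : IsMinimalAction ((conjHom f).comp Φ) := by
  intro x
  have hset : {y | ∃ g, ((conjHom f).comp Φ) g x = y}
      = ⇑f '' {y | ∃ g, Φ g (f.symm x) = y} := by
    ext y
    constructor
    · rintro ⟨g, hg⟩
      exact ⟨Φ g (f.symm x), ⟨g, rfl⟩, hg⟩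
    · rintro ⟨z, ⟨g, hg⟩, hz⟩
      exact ⟨g, by rw [MonoidHom.comp_apply, conjHom_apply, hg, hz]⟩
  rw [hset]
  exact dense_oi_image f (hΦ (f.symm x))

/-- generators with index at most `K` -/
def lows (K : ℕ) : Set (FreeGroup ℕ) := {y | ∃ i ≤ K, y = FreeGroup.of i}

lemma lows_mono {K K' : ℕ} (h : K ≤ K') : lows K ⊆ lows K' :=
  fun _ ⟨i, hi, hy⟩ => ⟨i, le_trans hi h, hy⟩

lemma exists_lows_bound (g : FreeGroup ℕ) : ∃ K, g ∈ Subgroup.closure (lows K) := by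
  induction g using FreeGroup.induction_on with
  | C1 => exact ⟨0, one_mem _⟩
  | of i => exact ⟨i, Subgroup.subset_closure ⟨i, le_refl i, rfl⟩⟩
  | inv_of i _ => exact ⟨i, inv_mem (Subgroup.subset_closure ⟨i, le_refl i, rfl⟩)⟩
  | mul x y hx hy =>
    obtain ⟨K1, h1⟩ := hx
    obtain ⟨K2, h2⟩ := hy
    refine ⟨max K1 K2, mul_mem ?_ ?_⟩
    · exact Subgroup.closure_mono (lows_mono (le_max_left _ _)) h1
    · exact Subgroup.closure_mono (lows_mono (le_max_right _ _)) h2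

lemma exists_lows_bound_finset (I : Finset (FreeGroup ℕ)) :
    ∃ K, ∀ g ∈ I, g ∈ Subgroup.closure (lows K) := by
  classical
  induction I using Finset.induction_on with
  | empty => exact ⟨0, by simp⟩
  | @insert a s hnot ih =>
    obtain ⟨K1, h1⟩ := ih
    obtain ⟨K2, h2⟩ := exists_lows_bound a
    refine ⟨max K2 K1, ?_⟩
    intro g hg
    rcases Finset.mem_insert.1 hg with rfl | hg
    · exact Subgroup.closure_mono (lows_mono (le_max_left _ _)) h2
    · exact Subgroup.closure_mono (lows_mono (le_max_right _ _)) (h1 g hg)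

/-- the "fresh translations" generators -/
noncomputable def trGen (K : ℕ) (i : ℕ) : ℝ ≃o ℝ :=
  if i = K + 1 then OrderIso.addRight (1 : ℝ)
  else if i = K + 2 then OrderIso.addRight (Real.sqrt 2) else 1

lemma trGen_translation (K i : ℕ) : ∃ t : ℝ, ∀ y : ℝ, trGen K i y = y + t := by
  rw [trGen]
  split_ifs with h1 h2
  · exact ⟨1, fun y => by simp⟩
  · exact ⟨Real.sqrt 2, fun y => by simp⟩
  · exact ⟨0, fun y => by simp [oi_one_coe]⟩

lemma trGen_low {K i : ℕ} (h : i ≤ K) : trGen K i = 1 := by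
  rw [trGen, if_neg (by omega), if_neg (by omega)]

/-- a lifted action whose generators contain translations by 1 and √2 is minimal -/
lemma minimal_of_translations (gens : ℕ → ℝ ≃o ℝ) (i1 i2 : ℕ) (hne : i1 ≠ i2)
    (h1 : gens i1 = OrderIso.addRight (1 : ℝ))
    (h2 : gens i2 = OrderIso.addRight (Real.sqrt 2)) :
    IsMinimalAction (FreeGroup.lift gens) := by
  intro x
  set Φ := FreeGroup.lift gens with hΦ
  let B : AddSubgroup ℝ :=
    { carrier := {s : ℝ | ∃ g : FreeGroup ℕ, ∀ y : ℝ, Φ g y = y + s}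
      zero_mem' := ⟨1, fun y => by rw [map_one, oi_one_coe]; simp⟩
      add_mem' := by
        rintro a b ⟨g, hg⟩ ⟨g', hg'⟩
        exact ⟨g * g', fun y => by
          rw [map_mul, RelIso.mul_apply, hg', hg]; ring⟩
      neg_mem' := by
        rintro a ⟨g, hg⟩
        refine ⟨g⁻¹, fun y => ?_⟩
        have h := hg (y - a)
        have : Φ g⁻¹ (Φ g (y - a)) = y - a := by
          rw [map_inv]
          exact (Φ g).symm_apply_apply (y - a)
        rw [h] at this
        rw [sub_add_cancel] at this
        rw [this]
        ring }
  have h1B : (1 : ℝ) ∈ B := by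
    refine ⟨FreeGroup.of i1, fun y => ?_⟩
    show (FreeGroup.lift gens) (FreeGroup.of i1) y = y + 1
    rw [FreeGroup.lift_apply_of, h1]
    simp
  have h2B : Real.sqrt 2 ∈ B := by
    refine ⟨FreeGroup.of i2, fun y => ?_⟩
    show (FreeGroup.lift gens) (FreeGroup.of i2) y = y + Real.sqrt 2
    rw [FreeGroup.lift_apply_of, h2]
    simp
  have hdense : Dense (B : Set ℝ) := by
    rcases AddSubgroup.dense_or_cyclic B with h | ⟨a, ha⟩
    · exact h
    · exfalso
      rw [ha] at h1B h2B
      rw [AddSubgroup.mem_closure_singleton] at h1B h2B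
      obtain ⟨p, hp⟩ := h1B
      obtain ⟨q, hq⟩ := h2B
      rw [zsmul_eq_mul] at hp hq
      have hp0 : (p : ℝ) ≠ 0 := by
        intro h; rw [h, zero_mul] at hp; exact one_ne_zero hp.symm
      have ha0 : a ≠ 0 := by
        intro h; rw [h, mul_zero] at hp; exact one_ne_zero hp.symm
      have : Real.sqrt 2 = (q : ℝ) / (p : ℝ) := by
        have hap : a = 1 / (p : ℝ) := by field_simp at hp ⊢; linarith [hp]
        rw [← hq, hap]; field_simp
      exact irrational_sqrt_two ⟨(q : ℚ) / (p : ℚ), by push_cast; rw [← this]⟩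
  have himg : Dense ((fun s => x + s) '' (B : Set ℝ)) := by
    have := (Homeomorph.addLeft x).isOpenMap
    exact (Homeomorph.addLeft x).surjective.denseRange.dense_image
      (Homeomorph.addLeft x).continuous hdense
  refine Dense.mono ?_ himg
  rintro y ⟨s, hs, rfl⟩
  obtain ⟨g, hg⟩ := hs
  exact ⟨g, hg x⟩

lemma pure_eq_of (i : ℕ) : (pure i : FreeGroup ℕ) = FreeGroup.of i := rfl

noncomputable def ThetaHom (K : ℕ) : FreeGroup ℕ →* (ℝ ≃o ℝ) := FreeGroup.lift (trGen K)

lemma ThetaHom_translation (K : ℕ) (g : FreeGroup ℕ) :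
    ∃ t : ℝ, ∀ y : ℝ, ThetaHom K g y = y + t := by
  induction g using FreeGroup.induction_on with
  | C1 => exact ⟨0, fun y => by rw [map_one, oi_one_coe]; simp⟩
  | of i =>
    obtain ⟨t, ht⟩ := trGen_translation K i
    exact ⟨t, fun y => by rw [ThetaHom, FreeGroup.lift_apply_of]; exact ht y⟩
  | inv_of i _ =>
    obtain ⟨t, ht⟩ := trGen_translation K i
    refine ⟨-t, fun y => ?_⟩
    rw [map_inv]
    have h1 : ThetaHom K (FreeGroup.of i) = trGen K i := by rw [ThetaHom, FreeGroup.lift_apply_of]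
    rw [h1, oi_inv_coe, OrderIso.symm_apply_eq, ht]
    ring
  | mul a b ha hb =>
    obtain ⟨ta, hta⟩ := ha
    obtain ⟨tb, htb⟩ := hb
    refine ⟨tb + ta, fun y => ?_⟩
    rw [map_mul, RelIso.mul_apply, htb, hta]
    ring

noncomputable def gensU (K : ℕ) (φH : FreeGroup ℕ →* (ℝ ≃o ℝ)) (d : ℝ) (hd : 0 < d)
    (i : ℕ) : ℝ ≃o ℝ :=
  if i ≤ K then sqIso hd (φH (FreeGroup.of i)) else trGen K i

noncomputable def PhiHom (K : ℕ) (φH : FreeGroup ℕ →* (ℝ ≃o ℝ)) (d : ℝ) (hd : 0 < d) :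
    FreeGroup ℕ →* (ℝ ≃o ℝ) := FreeGroup.lift (gensU K φH d hd)

lemma PhiHom_on_lows (K : ℕ) (φH : FreeGroup ℕ →* (ℝ ≃o ℝ)) (d : ℝ) (hd : 0 < d)
    {g : FreeGroup ℕ} (hg : g ∈ Subgroup.closure (lows K)) :
    PhiHom K φH d hd g = sqHom hd (φH g) := by
  refine Subgroup.closure_induction ?_ ?_ ?_ ?_ hg
  · rintro x ⟨i, hi, rfl⟩
    rw [PhiHom, FreeGroup.lift_apply_of, gensU, if_pos hi]
    rfl
  · rw [map_one, map_one, map_one]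
  · intro x y _ _ hx hy
    rw [map_mul, map_mul, map_mul, hx, hy]
  · intro x _ hx
    rw [map_inv, map_inv, map_inv, hx]

lemma gensU_hi (K : ℕ) (φH : FreeGroup ℕ →* (ℝ ≃o ℝ)) (d : ℝ) (hd : 0 < d)
    {i : ℕ} (h : ¬ i ≤ K) : gensU K φH d hd i = trGen K i := by
  rw [gensU, if_neg h]

lemma PhiHom_minimal (K : ℕ) (φH : FreeGroup ℕ →* (ℝ ≃o ℝ)) (d : ℝ) (hd : 0 < d) :
    IsMinimalAction (PhiHom K φH d hd) := by
  apply minimal_of_translations (gensU K φH d hd) (K+1) (K+2) (by omega)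
  · rw [gensU_hi K φH d hd (by omega), trGen, if_pos rfl]
  · rw [gensU_hi K φH d hd (by omega), trGen, if_neg (by omega), if_pos rfl]

lemma ThetaHom_minimal (K : ℕ) : IsMinimalAction (ThetaHom K) := by
  apply minimal_of_translations (trGen K) (K+1) (K+2) (by omega)
  · rw [trGen, if_pos rfl]
  · rw [trGen, if_neg (by omega), if_pos rfl]

lemma estimate (K : ℕ) (φH : FreeGroup ℕ →* (ℝ ≃o ℝ)) (g : FreeGroup ℕ) :
    ∃ C : ℝ, 0 ≤ C ∧ ∀ (d : ℝ) (hd : 0 < d) (x : ℝ),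
      |PhiHom K φH d hd g x - ThetaHom K g x| ≤ C * d := by
  induction g using FreeGroup.induction_on with
  | C1 =>
    refine ⟨0, le_refl 0, fun d hd x => ?_⟩
    rw [map_one, map_one, oi_one_coe]
    simp
  | of i =>
    refine ⟨2, by norm_num, fun d hd x => ?_⟩
    have h1 : PhiHom K φH d hd (FreeGroup.of i) = gensU K φH d hd i := by
      rw [PhiHom, FreeGroup.lift_apply_of]
    have h2 : ThetaHom K (FreeGroup.of i) = trGen K i := by
      rw [ThetaHom, FreeGroup.lift_apply_of]
    rw [h1, h2]
    by_cases hi : i ≤ K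
    · rw [gensU, if_pos hi, trGen_low hi, oi_one_coe, coe_sqIso hd]
      exact abs_sqFun_sub hd _ x
    · rw [gensU, if_neg hi]
      simp only [sub_self, abs_zero]
      positivity
  | inv_of i _ =>
    refine ⟨2, by norm_num, fun d hd x => ?_⟩
    have h1 : PhiHom K φH d hd ((FreeGroup.of i)⁻¹) = (gensU K φH d hd i)⁻¹ := by
      rw [map_inv, PhiHom, FreeGroup.lift_apply_of]
    have h2 : ThetaHom K ((FreeGroup.of i)⁻¹) = (trGen K i)⁻¹ := by
      rw [map_inv, ThetaHom, FreeGroup.lift_apply_of]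
    rw [h1, h2]
    by_cases hi : i ≤ K
    · rw [gensU, if_pos hi, trGen_low hi, inv_one, oi_one_coe, oi_inv_coe,
        coe_sqIso_symm hd]
      exact abs_sqFun_sub hd _ x
    · rw [gensU, if_neg hi]
      simp only [sub_self, abs_zero]
      positivity
  | mul a b ha hb =>
    obtain ⟨Ca, hCa0, hCa⟩ := ha
    obtain ⟨Cb, hCb0, hCb⟩ := hb
    refine ⟨Ca + Cb, by positivity, fun d hd x => ?_⟩
    obtain ⟨t, ht⟩ := ThetaHom_translation K a
    rw [map_mul, map_mul, RelIso.mul_apply, RelIso.mul_apply]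
    calc |PhiHom K φH d hd a (PhiHom K φH d hd b x) - ThetaHom K a (ThetaHom K b x)|
        ≤ |PhiHom K φH d hd a (PhiHom K φH d hd b x) - ThetaHom K a (PhiHom K φH d hd b x)|
          + |ThetaHom K a (PhiHom K φH d hd b x) - ThetaHom K a (ThetaHom K b x)| :=
          abs_sub_le _ _ _
      _ ≤ Ca * d + Cb * d := by
          gcongr
          · exact hCa d hd _
          · rw [ht, ht, add_sub_add_right_eq_sub]
            exact hCb d hd x
      _ = (Ca + Cb) * d := by ring

lemma finset_abs_bound (S : Finset ℝ) : ∃ M : ℝ, 0 < M ∧ ∀ s ∈ S, |s| < M := by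
  classical
  obtain ⟨b, hb⟩ := (S.image (fun s => |s|)).bddAbove
  refine ⟨max b 0 + 1, by positivity, fun s hs => ?_⟩
  have : |s| ≤ b := hb (Finset.mem_coe.2 (Finset.mem_image_of_mem _ hs))
  have hb0 : b ≤ max b 0 := le_max_left _ _
  linarith

lemma box_data (U : Set ↥(RepMin (FreeGroup ℕ))) (hUo : IsOpen U)
    (φS : ↥(RepMin (FreeGroup ℕ))) (hφ : φS ∈ U) :
    ∃ (I : Finset (FreeGroup ℕ)) (X : FreeGroup ℕ → Finset ℝ),
      ∀ w : ↥(RepMin (FreeGroup ℕ)),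
        (∀ g ∈ I, ∀ x ∈ X g, (w : FreeGroup ℕ → ℝ → ℝ) g x
          = (φS : FreeGroup ℕ → ℝ → ℝ) g x) → w ∈ U := by
  classical
  obtain ⟨O, hO, hOU⟩ := isOpen_induced_iff.1 hUo
  have hφO : (φS : FreeGroup ℕ → ℝ → ℝ) ∈ O := by
    rw [← hOU] at hφ; exact hφ
  obtain ⟨I, u, hu, hsub⟩ := isOpen_pi_iff.1 hO _ hφO
  choose Xf v hv hsub2 using fun (a : FreeGroup ℕ) (ha : a ∈ I) =>
    isOpen_pi_iff.1 (hu a ha).1 _ (hu a ha).2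
  refine ⟨I, fun g => if h : g ∈ I then Xf g h else ∅, ?_⟩
  intro w hw
  have : (w : FreeGroup ℕ → ℝ → ℝ) ∈ O := by
    apply hsub
    intro a ha
    have ha' : a ∈ I := Finset.mem_coe.1 ha
    apply hsub2 a ha'
    intro x hx
    have hx' : x ∈ Xf a ha' := Finset.mem_coe.1 hx
    have hval := (hv a ha' x hx').2
    have heq := hw a ha' x (by simp only [dif_pos ha']; exact hx')
    rw [heq]
    exact hval
  rw [← hOU]
  exact this

lemma side_lemma (K : ℕ) (U : Set ↥(RepMin (FreeGroup ℕ)))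
    (hUinv : ∀ φ : ↥(RepMin (FreeGroup ℕ)), φ ∈ U →
      ∀ f : ℝ ≃o ℝ, f 0 = 0 →
        ∀ ψ : ↥(RepMin (FreeGroup ℕ)),
          (ψ : FreeGroup ℕ → ℝ → ℝ) = conjFun f (φ : FreeGroup ℕ → ℝ → ℝ) → ψ ∈ U)
    (φS : ↥(RepMin (FreeGroup ℕ)))
    (φH : FreeGroup ℕ →* (ℝ ≃o ℝ)) (hφeq : (φS : FreeGroup ℕ → ℝ → ℝ) = actMap φH)
    (I : Finset (FreeGroup ℕ)) (X : FreeGroup ℕ → Finset ℝ)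
    (hbox : ∀ w : ↥(RepMin (FreeGroup ℕ)),
      (∀ g ∈ I, ∀ x ∈ X g, (w : FreeGroup ℕ → ℝ → ℝ) g x
        = (φS : FreeGroup ℕ → ℝ → ℝ) g x) → w ∈ U)
    (hIK : ∀ g ∈ I, g ∈ Subgroup.closure (lows K))
    (d : ℝ) (hd : 0 < d) :
    ∃ uS : ↥(RepMin (FreeGroup ℕ)), uS ∈ U ∧
      (uS : FreeGroup ℕ → ℝ → ℝ) = actMap (PhiHom K φH d hd) := by
  classical
  set S : Finset ℝ :=
    I.biUnion (fun g => X g ∪ (X g).image (fun x => (φS : FreeGroup ℕ → ℝ → ℝ) g x)) with hS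
  obtain ⟨M, hM0, hMb⟩ := finset_abs_bound S
  obtain ⟨f, hfj, hf0⟩ := exists_plIso hd hM0
  set Φn := PhiHom K φH d hd with hΦn
  have hΦmin : IsMinimalAction Φn := PhiHom_minimal K φH d hd
  set Wn := (conjHom f.symm).comp Φn with hWn
  have hWmin : IsMinimalAction Wn := minimal_conj Φn hΦmin f.symm
  let wS : ↥(RepMin (FreeGroup ℕ)) := ⟨actMap Wn, Wn, hWmin, rfl⟩
  have hval : ∀ g ∈ I, ∀ x ∈ X g,
      actMap Wn g x = (φS : FreeGroup ℕ → ℝ → ℝ) g x := by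
    intro g hg x hx
    have hxS : x ∈ S := Finset.mem_biUnion.2 ⟨g, hg, Finset.mem_union_left _ hx⟩
    have hgxS : (φS : FreeGroup ℕ → ℝ → ℝ) g x ∈ S :=
      Finset.mem_biUnion.2 ⟨g, hg, Finset.mem_union_right _ (Finset.mem_image_of_mem _ hx)⟩
    have hxM : |x| < M := hMb x hxS
    have hfgx : (φS : FreeGroup ℕ → ℝ → ℝ) g x = φH g x := by rw [hφeq]; rfl
    have hgxM : |φH g x| < M := by rw [← hfgx]; exact hMb _ hgxS
    have hΦg : Φn g = sqHom hd (φH g) := PhiHom_on_lows K φH d hd (hIK g hg)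
    show (conjHom f.symm) (Φn g) x = _
    rw [conjHom_apply, OrderIso.symm_symm, hΦg]
    have hmid : (sqHom hd (φH g)) (f x) = jd d (φH g x) := by
      rw [hfj x (le_of_lt hxM)]
      show sqFun d (⇑(φH g)) (jd d x) = jd d (φH g x)
      exact sqFun_jd hd _ x
    rw [hmid, hfgx, OrderIso.symm_apply_eq]
    exact (hfj _ (le_of_lt hgxM)).symm
  have hwU : wS ∈ U := hbox wS hval
  let uS : ↥(RepMin (FreeGroup ℕ)) := ⟨actMap Φn, Φn, hΦmin, rfl⟩
  have hconj : (uS : FreeGroup ℕ → ℝ → ℝ) = conjFun f (wS : FreeGroup ℕ → ℝ → ℝ) := by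
    funext g x
    show Φn g x = f ((conjHom f.symm (Φn g)) (f.symm x))
    rw [conjHom_apply, OrderIso.symm_symm]
    rw [f.apply_symm_apply, f.apply_symm_apply]
  exact ⟨uS, hUinv wS hwU f hf0 uS hconj, rfl⟩


end

theorem stmt18 (U V : Set ↥(RepMin (FreeGroup ℕ)))
    (hUo : IsOpen U) (hVo : IsOpen V)
    (hUne : U.Nonempty) (hVne : V.Nonempty)
    (hUinv : ∀ φ : ↥(RepMin (FreeGroup ℕ)), φ ∈ U →
      ∀ f : ℝ ≃o ℝ, f 0 = 0 →
        ∀ ψ : ↥(RepMin (FreeGroup ℕ)),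
          (ψ : FreeGroup ℕ → ℝ → ℝ) = conjFun f (φ : FreeGroup ℕ → ℝ → ℝ) → ψ ∈ U)
    (hVinv : ∀ φ : ↥(RepMin (FreeGroup ℕ)), φ ∈ V →
      ∀ f : ℝ ≃o ℝ, f 0 = 0 →
        ∀ ψ : ↥(RepMin (FreeGroup ℕ)),
          (ψ : FreeGroup ℕ → ℝ → ℝ) = conjFun f (φ : FreeGroup ℕ → ℝ → ℝ) → ψ ∈ V) :
    (closure U ∩ closure V).Nonempty := by
  classical
  obtain ⟨φS, hφU⟩ := hUne
  obtain ⟨ψS, hψV⟩ := hVne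
  obtain ⟨φH, hφmin, hφeq⟩ := φS.2
  obtain ⟨ψH, hψmin, hψeq⟩ := ψS.2
  obtain ⟨IU, XU, hboxU⟩ := box_data U hUo φS hφU
  obtain ⟨IV, XV, hboxV⟩ := box_data V hVo ψS hψV
  obtain ⟨KU, hKU⟩ := exists_lows_bound_finset IU
  obtain ⟨KV, hKV⟩ := exists_lows_bound_finset IV
  set K := max KU KV with hK
  have hIKU : ∀ g ∈ IU, g ∈ Subgroup.closure (lows K) := fun g hg =>
    Subgroup.closure_mono (lows_mono (le_max_left _ _)) (hKU g hg)
  have hIKV : ∀ g ∈ IV, g ∈ Subgroup.closure (lows K) := fun g hg =>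
    Subgroup.closure_mono (lows_mono (le_max_right _ _)) (hKV g hg)
  have hd : ∀ n : ℕ, (0:ℝ) < 1/((n:ℝ)+1) := fun n => by positivity
  have hseqU : ∀ n : ℕ, ∃ uS : ↥(RepMin (FreeGroup ℕ)), uS ∈ U ∧
      (uS : FreeGroup ℕ → ℝ → ℝ) = actMap (PhiHom K φH (1/((n:ℝ)+1)) (hd n)) :=
    fun n => side_lemma K U hUinv φS φH hφeq IU XU hboxU hIKU _ (hd n)
  have hseqV : ∀ n : ℕ, ∃ vS : ↥(RepMin (FreeGroup ℕ)), vS ∈ V ∧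
      (vS : FreeGroup ℕ → ℝ → ℝ) = actMap (PhiHom K ψH (1/((n:ℝ)+1)) (hd n)) :=
    fun n => side_lemma K V hVinv ψS ψH hψeq IV XV hboxV hIKV _ (hd n)
  choose uS huU huE using hseqU
  choose vS hvV hvE using hseqV
  let ΘS : ↥(RepMin (FreeGroup ℕ)) :=
    ⟨actMap (ThetaHom K), ThetaHom K, ThetaHom_minimal K, rfl⟩
  have htend : ∀ (wH : FreeGroup ℕ →* (ℝ ≃o ℝ)) (wS : ℕ → ↥(RepMin (FreeGroup ℕ))),
      (∀ n : ℕ, (wS n : FreeGroup ℕ → ℝ → ℝ)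
        = actMap (PhiHom K wH (1/((n:ℝ)+1)) (hd n))) →
      Tendsto wS atTop (𝓝 ΘS) := by
    intro wH wS hwE
    rw [tendsto_subtype_rng]
    rw [tendsto_pi_nhds]
    intro g
    rw [tendsto_pi_nhds]
    intro x
    obtain ⟨C, hC0, hC⟩ := estimate K wH g
    rw [tendsto_iff_dist_tendsto_zero]
    apply squeeze_zero (g := fun n : ℕ => C * (1/((n:ℝ)+1))) (fun n => dist_nonneg)
    · intro n
      rw [Real.dist_eq, hwE n]
      exact hC _ (hd n) x
    · have h := tendsto_one_div_add_atTop_nhds_zero_nat (𝕜 := ℝ)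
      have h2 := h.const_mul C
      simpa using h2
  exact ⟨ΘS, mem_closure_of_tendsto (htend φH uS huE) (Filter.Eventually.of_forall huU),
    mem_closure_of_tendsto (htend ψH vS hvE) (Filter.Eventually.of_forall hvV)⟩
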